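/- For every positive integer n, β(n)² = Σ_{dk = n} d·2^{ω(d)}·λ(d)·σ₂(k), where ω(d) is the number of distinct prime factors of d and σ₂(k) = Σ_{e∣k} e². -/

import Mathlib

/-- The Liouville function `λ(n) = (-1)^Ω(n)`. -/
def lam (n : ℕ) : ℤ := (-1) ^ (ArithmeticFunction.cardFactors n)

/-- The alternating sum-of-divisors function `β(n) = ∑_{d ∣ n} d · λ(n/d)`. -/
def beta (n : ℕ) : ℤ := ∑ d ∈ n.divisors, (d : ℤ) * lam (n / d)

open Finset ArithmeticFunction

private def Tt (x : ℤ) (a : ℕ) : ℤ := ∑ j ∈ range (a+1), (-1)^(a-j) * x^j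
private def Ss (x : ℤ) (a : ℕ) : ℤ := ∑ t ∈ range (a+1), x^(2*t)
private def Ee (x : ℤ) (a : ℕ) : ℤ := ∑ j ∈ range (a+1), (-1)^j * x^j * Ss x (a-j)

lemma Tt_succ (x : ℤ) (a : ℕ) : Tt x (a+1) = x^(a+1) - Tt x a := by
  rw [Tt, Finset.sum_range_succ, Nat.sub_self, pow_zero, one_mul]
  have : ∑ j ∈ range (a+1), (-1:ℤ)^(a+1-j) * x^j = -Tt x a := by
    rw [Tt, ← Finset.sum_neg_distrib]
    refine Finset.sum_congr rfl fun j hj => ?_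
    have hj' : j ≤ a := Nat.lt_succ_iff.mp (Finset.mem_range.mp hj)
    rw [show a + 1 - j = (a - j) + 1 by omega, pow_succ]
    ring
  rw [this]; ring

lemma Tt_mul (x : ℤ) (a : ℕ) : (1+x) * Tt x a = x^(a+1) + (-1)^a := by
  induction a with
  | zero => simp [Tt]; ring
  | succ a ih =>
    rw [Tt_succ]
    have : (-1:ℤ)^(a+1) = -(-1)^a := by ring
    rw [this]
    linear_combination -ih

lemma Ss_mul (x : ℤ) (a : ℕ) : (x^2 - 1) * Ss x a = x^(2*(a+1)) - 1 := by
  have := geom_sum_mul (x^2) (a+1)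
  rw [Ss]
  simp_rw [pow_mul]
  linear_combination this

lemma Ss_succ (x : ℤ) (a : ℕ) : Ss x (a+1) = Ss x a + x^(2*(a+1)) := by
  rw [Ss, Ss, Finset.sum_range_succ]

lemma Ee_succ (x : ℤ) (a : ℕ) : Ee x (a+1) = Ss x (a+1) - x * Ee x a := by
  rw [Ee, Finset.sum_range_succ']
  simp only [pow_zero, one_mul, Nat.sub_zero]
  have : ∀ j ∈ range (a+1), (-1:ℤ)^(j+1) * x^(j+1) * Ss x (a+1-(j+1))
      = -x * ((-1)^j * x^j * Ss x (a-j)) := by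
    intro j hj
    rw [Nat.succ_sub_succ]
    ring
  rw [Finset.sum_congr rfl this, ← Finset.mul_sum, Ee]
  ring

lemma key_core (x : ℤ) (hx : (1:ℤ) + x ≠ 0) (a : ℕ) :
    (Tt x a)^2 + Ss x a = 2 * Ee x a := by
  induction a with
  | zero => simp [Tt, Ss, Ee]
  | succ a ih =>
    have he : ((-1:ℤ)^a)^2 = 1 := by
      rw [← pow_mul, mul_comm, pow_mul, neg_one_sq, one_pow]
    have h1 : ((1+x) * Tt x a)^2 = (x^(a+1) + (-1)^a)^2 := by rw [Tt_mul]
    have aux : (1+x) * ((1+x)*(Tt x a)^2 - 2*x^(a+1)*(Tt x a)) = (1+x) * ((1-x) * Ss x a) := by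
      linear_combination h1 - 2*x^(a+1)*(Tt_mul x a) + Ss_mul x a + he
    have aux2 := mul_left_cancel₀ hx aux
    rw [Tt_succ, Ee_succ, Ss_succ]
    linear_combination (-x)*ih + aux2

lemma key' (x : ℤ) (hx : (1:ℤ) + x ≠ 0) (a : ℕ) :
    (Tt x a)^2 = ∑ j ∈ range (a+1),
      (if j = 0 then (1:ℤ) else 2) * ((-1)^j * x^j * Ss x (a-j)) := by
  have h := key_core x hx a
  have hsplit : ∑ j ∈ range (a+1), (if j = 0 then (1:ℤ) else 2) * ((-1)^j * x^j * Ss x (a-j))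
      = 2 * Ee x a - Ss x a := by
    rw [Finset.sum_range_succ', Ee, Finset.sum_range_succ']
    simp only [if_neg (Nat.succ_ne_zero _), if_pos rfl, Nat.sub_zero, pow_zero, one_mul,
      mul_add, Finset.mul_sum]
    norm_num
    ring
  rw [hsplit]
  linear_combination h

lemma lam_one : lam 1 = 1 := by simp [lam]

lemma lam_mul {m n : ℕ} (hm : m ≠ 0) (hn : n ≠ 0) : lam (m * n) = lam m * lam n := by
  rw [lam, lam, lam, ArithmeticFunction.cardFactors_mul hm hn, pow_add]

lemma lam_prime_pow {p k : ℕ} (hp : p.Prime) : lam (p ^ k) = (-1) ^ k := by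
  rw [lam, ArithmeticFunction.cardFactors_apply_prime_pow hp]

private def Lf : ArithmeticFunction ℤ := ⟨fun n => if n = 0 then 0 else lam n, by simp⟩

lemma Lf_apply {n : ℕ} (hn : n ≠ 0) : Lf n = lam n := if_neg hn

lemma hLf : Lf.IsMultiplicative := by
  rw [ArithmeticFunction.IsMultiplicative.iff_ne_zero]
  constructor
  · rw [Lf_apply one_ne_zero, lam_one]
  · intro m n hm hn _
    rw [Lf_apply (Nat.mul_ne_zero hm hn), Lf_apply hm, Lf_apply hn, lam_mul hm hn]

private def Gf : ArithmeticFunction ℤ :=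
  ⟨fun d => if d = 0 then 0 else (d : ℤ) * 2 ^ (ArithmeticFunction.cardDistinctFactors d) * lam d,
   by simp⟩

lemma Gf_apply {d : ℕ} (hd : d ≠ 0) :
    Gf d = (d : ℤ) * 2 ^ (ArithmeticFunction.cardDistinctFactors d) * lam d := if_neg hd

lemma omega_eq_card (k : ℕ) :
    ArithmeticFunction.cardDistinctFactors k = k.primeFactors.card := by
  rw [ArithmeticFunction.cardDistinctFactors_apply, Nat.primeFactors, List.card_toFinset]

lemma omega_mul {m n : ℕ} (hm : m ≠ 0) (hn : n ≠ 0) (h : Nat.Coprime m n) :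
    ArithmeticFunction.cardDistinctFactors (m * n) =
      ArithmeticFunction.cardDistinctFactors m + ArithmeticFunction.cardDistinctFactors n := by
  rw [omega_eq_card, omega_eq_card, omega_eq_card, h.primeFactors_mul,
    Finset.card_union_of_disjoint h.disjoint_primeFactors]

lemma hGf : Gf.IsMultiplicative := by
  rw [ArithmeticFunction.IsMultiplicative.iff_ne_zero]
  constructor
  · rw [Gf_apply one_ne_zero, lam_one, ArithmeticFunction.cardDistinctFactors_one]
    norm_num
  · intro m n hm hn hmn
    rw [Gf_apply (Nat.mul_ne_zero hm hn), Gf_apply hm, Gf_apply hn, lam_mul hm hn,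
      omega_mul hm hn hmn, pow_add]
    push_cast
    ring

private def Bf : ArithmeticFunction ℤ :=
  ((ArithmeticFunction.id : ArithmeticFunction ℕ) : ArithmeticFunction ℤ) * Lf

lemma hBf : Bf.IsMultiplicative :=
  (ArithmeticFunction.isMultiplicative_id.natCast).mul hLf

lemma beta_eq {n : ℕ} (hn : n ≠ 0) : beta n = Bf n := by
  rw [Bf, ArithmeticFunction.mul_apply,
    Nat.sum_divisorsAntidiagonal
      (fun d e => (((ArithmeticFunction.id : ArithmeticFunction ℕ) : ArithmeticFunction ℤ) d * Lf e)),
    beta]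
  refine Finset.sum_congr rfl fun d hd => ?_
  obtain ⟨hdvd, -⟩ := Nat.mem_divisors.mp hd
  have hnd : n / d ≠ 0 := by
    have := Nat.le_of_dvd (Nat.pos_of_ne_zero hn) hdvd
    have hd0 : d ≠ 0 := by rintro rfl; simp at hdvd; exact hn hdvd
    exact Nat.ne_of_gt (Nat.div_pos this (Nat.pos_of_ne_zero hd0))
  rw [Lf_apply hnd, ArithmeticFunction.natCoe_apply, ArithmeticFunction.id_apply]

private def Sig : ArithmeticFunction ℤ :=
  ((ArithmeticFunction.sigma 2 : ArithmeticFunction ℕ) : ArithmeticFunction ℤ)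

lemma Sig_prime_pow {p : ℕ} (hp : p.Prime) (m : ℕ) : Sig (p ^ m) = Ss (p : ℤ) m := by
  rw [Sig, ArithmeticFunction.natCoe_apply, ArithmeticFunction.sigma_apply, Ss]
  rw [Nat.sum_divisors_prime_pow hp]
  push_cast
  refine Finset.sum_congr rfl fun t _ => ?_
  rw [← pow_mul, Nat.mul_comm]

lemma Bf_prime_pow {p : ℕ} (hp : p.Prime) (i : ℕ) : Bf (p ^ i) = Tt (p : ℤ) i := by
  rw [Bf, ArithmeticFunction.mul_apply,
    Nat.sum_divisorsAntidiagonal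
      (fun d e => (((ArithmeticFunction.id : ArithmeticFunction ℕ) : ArithmeticFunction ℤ) d * Lf e)),
    Nat.sum_divisors_prime_pow hp, Tt]
  refine Finset.sum_congr rfl fun j hj => ?_
  have hj' : j ≤ i := Nat.lt_succ_iff.mp (Finset.mem_range.mp hj)
  rw [Nat.pow_div hj' hp.pos, Lf_apply (pow_ne_zero _ hp.ne_zero), lam_prime_pow hp,
    ArithmeticFunction.natCoe_apply, ArithmeticFunction.id_apply]
  push_cast
  ring

lemma hSigM : Sig.IsMultiplicative :=
  ArithmeticFunction.isMultiplicative_sigma.natCast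

lemma main_eq : Bf.pmul Bf = Gf * Sig := by
  rw [ArithmeticFunction.IsMultiplicative.eq_iff_eq_on_prime_powers _ (hBf.pmul hBf) _
    (hGf.mul hSigM)]
  intro p i hp
  have hx : (1 : ℤ) + (p : ℤ) ≠ 0 := by
    have := hp.two_le
    positivity
  rw [ArithmeticFunction.pmul_apply, Bf_prime_pow hp, ← sq, key' (p : ℤ) hx i,
    ArithmeticFunction.mul_apply,
    Nat.sum_divisorsAntidiagonal (fun d e => Gf d * Sig e),
    Nat.sum_divisors_prime_pow hp]
  refine Finset.sum_congr rfl fun j hj => ?_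
  have hj' : j ≤ i := Nat.lt_succ_iff.mp (Finset.mem_range.mp hj)
  rw [Nat.pow_div hj' hp.pos, Sig_prime_pow hp, Gf_apply (pow_ne_zero _ hp.ne_zero),
    lam_prime_pow hp]
  rcases Nat.eq_zero_or_pos j with rfl | hjpos
  · simp [ArithmeticFunction.cardDistinctFactors_one]
  · rw [ArithmeticFunction.cardDistinctFactors_apply_prime_pow hp hjpos.ne', if_neg hjpos.ne']
    push_cast
    ring

theorem stmt_13 (n : ℕ) (hn : 0 < n) :
    beta n ^ 2 =
      ∑ p ∈ n.divisorsAntidiagonal,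
        (p.1 : ℤ) * 2 ^ (ArithmeticFunction.cardDistinctFactors p.1) * lam p.1 *
          (ArithmeticFunction.sigma 2 p.2 : ℤ) := by
  have hne : n ≠ 0 := hn.ne'
  have h1 : beta n ^ 2 = (Bf.pmul Bf) n := by
    rw [beta_eq hne, ArithmeticFunction.pmul_apply, sq]
  rw [h1, main_eq, ArithmeticFunction.mul_apply]
  refine Finset.sum_congr rfl fun q hq => ?_
  obtain ⟨hq1, hq2⟩ := Nat.mem_divisorsAntidiagonal.mp hq
  have hq1' : q.1 ≠ 0 := by
    rintro h
    rw [h] at hq1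
    simp at hq1
    exact hq2 hq1.symm
  rw [Gf_apply hq1', Sig, ArithmeticFunction.natCoe_apply]
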